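/- arXiv:1603.03914 — 3 statements merged into one kernel-verified Lean document; each statement's English description precedes it below -/
import Mathlib

section
/- Let $a$ be a part of a partition $\nu$ of $n$ and $\hat\nu$ the partition of $n-a$ obtained by removing one part equal to $a$. For a bicomposition $(\lambda\mid\mu)$ of $n$ with $\lambda$ of length $k$ and $\mu$ of length $\ell$, the character values satisfy the recursion $\psi_{(\lambda\mid\mu)}(\nu) = \sum_{i : \lambda_i \ge a} \psi_{(\lambda\downarrow_i a \mid \mu)}(\hat\nu) + (-1)^{a-1}\sum_{j : \mu_j \ge a} \psi_{(\lambda \mid \mu\downarrow_j a)}(\hat\nu)$, where $\lambda\downarrow_i a$ replaces $\lambda_i$ by $\lambda_i - a$. -/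
open MvPolynomial Finset

namespace Regev

/-- A list is a partition of `n`: weakly decreasing, positive parts, summing to `n`. -/
def IsPartitionOf (n : ℕ) (α : List ℕ) : Prop :=
  α.Pairwise (· ≥ ·) ∧ (∀ x ∈ α, 0 < x) ∧ α.sum = n

/-- The sorted (decreasing) list of parts of a partition. -/
def ptoList {n : ℕ} (p : Nat.Partition n) : List ℕ :=
  (p.parts.sort (· ≤ ·)).reverse

/-- The exponent vector `α + δ` where `δ = (n-1, n-2, …, 0)`. -/
noncomputable def expo (n : ℕ) (α : List ℕ) : Fin n →₀ ℕ :=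
  Finsupp.equivFunOnFinite.symm fun i => α.getD i 0 + (n - 1 - (i : ℕ))

/-- The Vandermonde alternant `a_δ = ∑_σ sgn(σ) ∏ x_i^{δ_{σ(i)}}`. -/
noncomputable def vand (n : ℕ) : MvPolynomial (Fin n) ℤ :=
  ∑ σ : Equiv.Perm (Fin n), (Equiv.Perm.sign σ : ℤ) • ∏ i : Fin n, X i ^ (n - 1 - (σ i : ℕ))

/-- The power sum product `p_ν = p_{ν₁} ⋯ p_{ν_r}` in `n` variables. -/
noncomputable def pprod (n : ℕ) (ν : List ℕ) : MvPolynomial (Fin n) ℤ :=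
  (ν.map fun m => MvPolynomial.psum (Fin n) ℤ m).prod

/-- The irreducible character value `χ_α(ν)` of `𝔖_n`, defined via the Frobenius character
formula: `χ_α(ν)` is the coefficient of `x^{α+δ}` in `p_ν · a_δ`. -/
noncomputable def chiVal (n : ℕ) (α ν : List ℕ) : ℤ :=
  MvPolynomial.coeff (expo n α) (pprod n ν * vand n)

/-- The cells of the Young diagram of the partition (given as a list) `α`. -/
def cells (α : List ℕ) : Finset (ℕ × ℕ) :=
  (Finset.range α.length ×ˢ Finset.range (α.foldr max 0)).filter fun c => c.2 < α.getD c.1 0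

/-- `f` is a semistandard `(k,ℓ)`-tableau in the sense of Berele–Regev: values in
`1 < ⋯ < k < 1' < ⋯ < ℓ'` (primed symbols are those of index `≥ k`), entries weakly increase
along rows and columns, primed entries strictly increase along rows, and unprimed entries
strictly increase down columns. -/
def IsBR (k l : ℕ) (α : List ℕ) (f : cells α → Fin (k + l)) : Prop :=
  (∀ i j (h1 : (i, j) ∈ cells α) (h2 : (i, j + 1) ∈ cells α),
    f ⟨(i, j), h1⟩ ≤ f ⟨(i, j + 1), h2⟩ ∧
      (k ≤ (f ⟨(i, j), h1⟩ : ℕ) → f ⟨(i, j), h1⟩ < f ⟨(i, j + 1), h2⟩)) ∧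
  (∀ i j (h1 : (i, j) ∈ cells α) (h2 : (i + 1, j) ∈ cells α),
    f ⟨(i, j), h1⟩ ≤ f ⟨(i + 1, j), h2⟩ ∧
      ((f ⟨(i + 1, j), h2⟩ : ℕ) < k → f ⟨(i, j), h1⟩ < f ⟨(i + 1, j), h2⟩))

/-- `s_{k,ℓ}(α)`: the number of semistandard `(k,ℓ)`-tableaux of shape `α`. -/
noncomputable def sBR (k l : ℕ) (α : List ℕ) : ℕ :=
  Nat.card {f : cells α → Fin (k + l) // IsBR k l α f}

/-- `s_{(λ∣μ)}(α)`: the number of semistandard `(k,ℓ)`-tableaux of shape `α` and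
weight `(λ ∣ μ)`. -/
noncomputable def sWeight (k l : ℕ) (α : List ℕ) (lam : Fin k → ℕ) (mu : Fin l → ℕ) : ℕ :=
  Nat.card {f : cells α → Fin (k + l) // IsBR k l α f ∧
    ∀ v : Fin (k + l),
      (Finset.univ.filter fun c => f c = v).card = Sum.elim lam mu (finSumFinEquiv.symm v)}

/-- The value at cycle type `ν` of the character `Λ_n^{k,ℓ} = ∑_{α ⊢ n} s_{k,ℓ}(α) χ_α`. -/
noncomputable def LambdaVal (k l n : ℕ) (ν : List ℕ) : ℤ :=
  ∑ p : Nat.Partition n, (sBR k l (ptoList p) : ℤ) * chiVal n (ptoList p) ν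

/-- The value at cycle type `ν` of `Γ_n = ∑_{a=1}^n χ_{(a,1^{n-a})}`. -/
noncomputable def GammaVal (n : ℕ) (ν : List ℕ) : ℤ :=
  ∑ a ∈ Finset.Icc 1 n, chiVal n (a :: List.replicate (n - a) 1) ν

/-- For a permutation `σ` lying in the Young subgroup determined by the block map `b`
(and `0` otherwise), the sign of the permutation induced on the primed blocks. This is the
character `χ_{(λ₁)} ⊠ ⋯ ⊠ χ_{(λ_k)} ⊠ χ_{(1^{μ₁})} ⊠ ⋯ ⊠ χ_{(1^{μ_ℓ})}` of the Young
subgroup, extended by zero. -/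
noncomputable def signOnPrimes {n k l : ℕ} (b : Fin n → Fin k ⊕ Fin l)
    (σ : Equiv.Perm (Fin n)) : ℚ :=
  if h : ∀ x, b (σ x) = b x then
    ((Equiv.Perm.sign (σ.subtypePerm (p := fun x => (b x).isRight = true)
      fun x => by simp only [h x]) : ℤ) : ℚ)
  else 0

/-- The value at `g` of the character of `𝔖_n` induced from the Young subgroup determined by
the block map `b` of the outer product of trivial characters (unprimed blocks) and sign
characters (primed blocks), via the standard induced character formula. -/
noncomputable def psiVal {n k l : ℕ} (b : Fin n → Fin k ⊕ Fin l) (g : Equiv.Perm (Fin n)) : ℚ :=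
  (∑ x : Equiv.Perm (Fin n), signOnPrimes b (x⁻¹ * g * x)) /
    (Nat.card {σ : Equiv.Perm (Fin n) // ∀ x, b (σ x) = b x})

/-- Semistandardness of a filling of an arbitrary cell set (intended: a skew diagram):
rows weakly increase, columns strictly increase. -/
def IsSSYT {N : ℕ} (S : Finset (ℕ × ℕ)) (f : S → Fin N) : Prop :=
  (∀ i j (h1 : (i, j) ∈ S) (h2 : (i, j + 1) ∈ S), f ⟨(i, j), h1⟩ ≤ f ⟨(i, j + 1), h2⟩) ∧
  (∀ i j (h1 : (i, j) ∈ S) (h2 : (i + 1, j) ∈ S), f ⟨(i, j), h1⟩ < f ⟨(i + 1, j), h2⟩)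

open scoped Classical in
/-- The (skew) Schur polynomial of a (skew) diagram `S` in `N` variables, as the generating
function of semistandard fillings. -/
noncomputable def skewSchur (N : ℕ) (S : Finset (ℕ × ℕ)) : MvPolynomial (Fin N) ℤ :=
  ∑ f ∈ Finset.univ.filter (fun f : S → Fin N => IsSSYT S f), ∏ c : S, X (f c)

/-- Adjacency of cells (sharing an edge). -/
def Adj (x y : ℕ × ℕ) : Prop :=
  (x.1 = y.1 ∧ (x.2 = y.2 + 1 ∨ y.2 = x.2 + 1)) ∨
  (x.2 = y.2 ∧ (x.1 = y.1 + 1 ∨ y.1 = x.1 + 1))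

/-- `x` and `y` lie in the same connected component of the diagram `S`. -/
def SameComp (S : Finset (ℕ × ℕ)) (x y : ℕ × ℕ) : Prop :=
  Relation.ReflTransGen (fun u v => u ∈ S ∧ v ∈ S ∧ Adj u v) x y


-- L1 : conjugating the block map
theorem signOnPrimes_comp {n k l : ℕ} (b : Fin n → Fin k ⊕ Fin l) (π σ : Equiv.Perm (Fin n)) :
    signOnPrimes (b ∘ π) σ = signOnPrimes b (π * σ * π⁻¹) := by
  unfold signOnPrimes
  have hiff : (∀ x, (b ∘ π) (σ x) = (b ∘ π) x) ↔ (∀ x, b ((π * σ * π⁻¹) x) = b x) := by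
    constructor
    · intro h x
      have := h (π⁻¹ x)
      simpa [Function.comp, Equiv.Perm.mul_apply] using this
    · intro h x
      have := h (π x)
      simpa [Function.comp, Equiv.Perm.mul_apply] using this
  by_cases h : ∀ x, (b ∘ π) (σ x) = (b ∘ π) x
  · rw [dif_pos h, dif_pos (hiff.mp h)]
    congr 1
    push_cast
    congr 1
    refine Equiv.Perm.sign_eq_sign_of_equiv _ _
      (Equiv.subtypeEquiv π (fun x => by simp [Function.comp])) ?_
    intro x
    ext
    simp [Equiv.Perm.subtypePerm_apply, Equiv.subtypeEquiv, Equiv.Perm.mul_apply]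
  · rw [dif_neg h, dif_neg (fun hh => h (hiff.mpr hh))]

-- L2 : numerator sums, conjugation invariance in g
theorem sum_signOnPrimes_conj {n k l : ℕ} (b : Fin n → Fin k ⊕ Fin l)
    {h h' : Equiv.Perm (Fin n)} (hc : IsConj h h') :
    ∑ z : Equiv.Perm (Fin n), signOnPrimes b (z⁻¹ * h * z)
      = ∑ z : Equiv.Perm (Fin n), signOnPrimes b (z⁻¹ * h' * z) := by
  obtain ⟨w, hw⟩ := isConj_iff.mp hc
  refine Fintype.sum_equiv (Equiv.mulLeft w) _ _ (fun z => ?_)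
  congr 1
  rw [← hw]
  simp [mul_assoc]

-- L3 : numerator sums, invariance under b ∘ π
theorem sum_signOnPrimes_comp {n k l : ℕ} (b : Fin n → Fin k ⊕ Fin l) (π : Equiv.Perm (Fin n))
    (h : Equiv.Perm (Fin n)) :
    ∑ z : Equiv.Perm (Fin n), signOnPrimes (b ∘ π) (z⁻¹ * h * z)
      = ∑ z : Equiv.Perm (Fin n), signOnPrimes b (z⁻¹ * h * z) := by
  have : ∀ z : Equiv.Perm (Fin n), signOnPrimes (b ∘ π) (z⁻¹ * h * z)
      = signOnPrimes b ((z * π⁻¹)⁻¹ * h * (z * π⁻¹)) := by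
    intro z
    rw [signOnPrimes_comp]
    congr 1
  simp_rw [this]
  exact Fintype.sum_equiv (Equiv.mulRight π⁻¹) _ _ (fun z => rfl)

-- L3a : existence of π matching two block maps with equal fiber cards
theorem exists_perm_comp {m : ℕ} {V : Type*} [Fintype V] [DecidableEq V]
    (β β' : Fin m → V)
    (hcard : ∀ v, (univ.filter fun x => β x = v).card = (univ.filter fun x => β' x = v).card) :
    ∃ π : Equiv.Perm (Fin m), β ∘ π = β' := by
  have hfib : ∀ v : V, Fintype.card {x // β' x = v} = Fintype.card {x // β x = v} := by
    intro v
    rw [Fintype.card_subtype, Fintype.card_subtype]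
    exact (hcard v).symm
  let fe : ∀ v : V, {x // β' x = v} ≃ {x // β x = v} := fun v => Fintype.equivOfCardEq (hfib v)
  refine ⟨((Equiv.sigmaFiberEquiv β').symm.trans
    ((Equiv.sigmaCongrRight fe).trans (Equiv.sigmaFiberEquiv β))), ?_⟩
  funext x
  simp only [Function.comp_apply, Equiv.Perm.coe_mul, Equiv.coe_trans]
  have : (Equiv.sigmaFiberEquiv β').symm x = ⟨β' x, ⟨x, rfl⟩⟩ := rfl
  rw [this]
  exact (fe (β' x) ⟨x, rfl⟩).2

theorem neg_one_pow_sub_one {a : ℕ} (ha : 0 < a) : ((-1 : ℚ)) ^ (a - 1) = -(-1 : ℚ) ^ a := by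
  obtain ⟨b, rfl⟩ := Nat.exists_eq_add_of_lt ha
  simp [pow_succ]

/-- Key pointwise lemma: splitting off an `a`-cycle supported in a single block. -/
theorem signOnPrimes_cycle_mul {n1 k l a : ℕ} (ha : 0 < a)
    (b : Fin n1 → Fin k ⊕ Fin l) (v : Fin k ⊕ Fin l) (S : Finset (Fin n1))
    (hS : ∀ t ∈ S, b t = v) (hcard : S.card = a)
    (d : Equiv.Perm (Fin n1)) (hd : d.IsCycle) (hdsupp : d.support = S)
    (τ : Equiv.Perm (Fin n1)) (hτ : ∀ t ∈ S, τ t = t)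
    (hmem : ∀ t : Fin n1, t ∉ S ↔ τ t ∉ S)
    (E : {t : Fin n1 // t ∉ S} ≃ Fin (n1 - a)) :
    signOnPrimes b (d * τ)
      = (Sum.elim (fun _ => (1:ℚ)) (fun _ => (-1:ℚ)^(a-1)) v)
        * signOnPrimes (fun w => b (E.symm w).val)
            (E.permCongr (τ.subtypePerm (fun t => (hmem t).symm))) := by
  have hdfix : ∀ t : Fin n1, t ∉ S → d t = t := by
    intro t ht
    by_contra h
    exact ht (hdsupp ▸ Equiv.Perm.mem_support.mpr h)
  have hdS : ∀ t : Fin n1, d t ∈ S ↔ t ∈ S := by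
    intro t
    rw [← hdsupp]
    exact Equiv.Perm.apply_mem_support
  set β : Fin (n1 - a) → Fin k ⊕ Fin l := fun w => b (E.symm w).val with hβ
  set τ' : Equiv.Perm {t : Fin n1 // t ∉ S} := τ.subtypePerm (fun t => (hmem t).symm) with hτ'
  have hAB : (∀ t, b ((d * τ) t) = b t) ↔ (∀ w, β ((E.permCongr τ') w) = β w) := by
    constructor
    · intro hA w
      have ht : ((E.symm w) : Fin n1) ∉ S := (E.symm w).2
      have h1 : (E.permCongr τ') w = E (τ' (E.symm w)) := by simp [Equiv.permCongr_apply]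
      have h2 : β ((E.permCongr τ') w) = b (τ (E.symm w).val) := by
        rw [h1, hβ]; simp [hτ']
      have h3 : (d * τ) ((E.symm w).val) = τ ((E.symm w).val) := by
        have : τ ((E.symm w).val) ∉ S := (hmem _).mp ht
        simp [Equiv.Perm.mul_apply, hdfix _ this]
      rw [h2, hβ]
      have := hA ((E.symm w).val)
      rw [h3] at this
      rw [this]
    · intro hB t
      by_cases htS : t ∈ S
      · have h1 : τ t = t := hτ t htS
        have h2 : (d * τ) t = d t := by simp [Equiv.Perm.mul_apply, h1]
        rw [h2, hS _ ((hdS t).mpr htS), hS _ htS]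
      · have := hB (E ⟨t, htS⟩)
        have h1 : β (E ⟨t, htS⟩) = b t := by rw [hβ]; simp
        have h2 : β ((E.permCongr τ') (E ⟨t, htS⟩)) = b (τ t) := by
          rw [hβ]; simp [Equiv.permCongr_apply, hτ']
        have h3 : (d * τ) t = τ t := by
          have : τ t ∉ S := (hmem _).mp htS
          simp [Equiv.Perm.mul_apply, hdfix _ this]
        rw [h3, ← h1, ← h2, this]
  unfold signOnPrimes
  by_cases hA : ∀ t, b ((d * τ) t) = b t
  · rw [dif_pos hA, dif_pos (hAB.mp hA)]
    have hbτ : ∀ t, b (τ t) = b t := by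
      intro t
      by_cases htS : t ∈ S
      · rw [hτ t htS]
      · have h3 : (d * τ) t = τ t := by
          have : τ t ∉ S := (hmem _).mp htS
          simp [Equiv.Perm.mul_apply, hdfix _ this]
        have := hA t
        rwa [h3] at this
    have hbd : ∀ t, b (d t) = b t := by
      intro t
      by_cases htS : t ∈ S
      · rw [hS _ ((hdS t).mpr htS), hS _ htS]
      · rw [hdfix _ htS]
    -- the three subtypePerm proofs, with arbitrary proof arguments
    have main : ∀ (h1 : ∀ x, (b ((d * τ) x)).isRight = true ↔ (b x).isRight = true)
        (h2 : ∀ w, (β ((E.permCongr τ') w)).isRight = true ↔ (β w).isRight = true),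
        ((Equiv.Perm.sign ((d * τ).subtypePerm (p := fun x => (b x).isRight = true) h1) : ℤ) : ℚ)
          = (Sum.elim (fun _ => (1:ℚ)) (fun _ => (-1:ℚ)^(a-1)) v)
            * ((Equiv.Perm.sign ((E.permCongr τ').subtypePerm (p := fun w => (β w).isRight = true) h2) : ℤ) : ℚ) := by
      intro h1 h2
      have hprd : ∀ x, (b (d x)).isRight = true ↔ (b x).isRight = true := by
        intro x; rw [hbd]
      have hprτ : ∀ x, (b (τ x)).isRight = true ↔ (b x).isRight = true := by
        intro x; rw [hbτ]
      have hsplit : (d * τ).subtypePerm (p := fun x => (b x).isRight = true) h1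
          = d.subtypePerm (p := fun x => (b x).isRight = true) hprd * τ.subtypePerm (p := fun x => (b x).isRight = true) hprτ := by
        ext ⟨t, ht⟩
        simp [Equiv.Perm.subtypePerm_apply, Equiv.Perm.mul_apply]
        rfl
      -- sign of the τ part equals sign of the transported permutation
      have hστ : Equiv.Perm.sign (τ.subtypePerm (p := fun x => (b x).isRight = true) hprτ)
          = Equiv.Perm.sign ((E.permCongr τ').subtypePerm (p := fun w => (β w).isRight = true) h2) := by
        set ρ : Equiv.Perm {x : Fin n1 // (b x).isRight = true} := τ.subtypePerm (p := fun x => (b x).isRight = true) hprτ with hρ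
        have h1ρ : ∀ y : {x : Fin n1 // (b x).isRight = true},
            ((ρ y : { x // (b x).isRight = true}) : Fin n1) ∉ S ↔ (y : Fin n1) ∉ S := by
          intro y
          simp only [hρ, Equiv.Perm.subtypePerm_apply]
          exact (hmem y.val).symm
        have h2ρ : ∀ y, ρ y ≠ y → (y : {x : Fin n1 // (b x).isRight = true}).val ∉ S := by
          intro y hy
          by_contra hc
          apply hy
          apply Subtype.ext
          simp only [hρ, Equiv.Perm.subtypePerm_apply]
          exact hτ _ hc
        rw [← Equiv.Perm.sign_subtypePerm ρ h1ρ h2ρ]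
        refine Equiv.Perm.sign_eq_sign_of_equiv _ _ ?_ ?_
        · refine ⟨fun y => ⟨E ⟨(y.val : Fin n1), y.2⟩, ?_⟩,
            fun w => ⟨⟨((E.symm w.val) : Fin n1), ?_⟩, (E.symm w.val).2⟩, ?_, ?_⟩
          · show (β (E ⟨(y.val : Fin n1), y.2⟩)).isRight = true
            have : β (E ⟨(y.val : Fin n1), y.2⟩) = b (y.val : Fin n1) := by
              rw [hβ]; simp
            rw [this]
            exact y.val.2
          · have hw := w.2
            show (b _).isRight = true
            exact hw
          · intro y
            ext
            simp
          · intro w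
            ext
            simp
        · intro y
          ext
          simp [Equiv.Perm.subtypePerm_apply, Equiv.permCongr_apply, hρ, hτ']
      rw [hsplit, map_mul]
      rcases v with i | j
      · -- unprimed block: the cycle part restricts to the identity
        have hone : d.subtypePerm (p := fun x => (b x).isRight = true) hprd = 1 := by
          ext ⟨t, ht⟩
          simp only [Equiv.Perm.subtypePerm_apply, Equiv.Perm.coe_one, id_eq]
          have hnot : t ∉ S := by
            intro htS
            have := hS _ htS
            rw [this] at ht
            simp at ht
          rw [hdfix t hnot]
        rw [hone, map_one, one_mul, hστ]
        simp
      · -- primed block: the cycle part contributes (-1)^(a-1)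
        have h2d : ∀ x, d x ≠ x → (b x).isRight = true := by
          intro x hx
          have hxS : x ∈ S := hdsupp ▸ Equiv.Perm.mem_support.mpr hx
          rw [hS _ hxS]
          rfl
        have hsd : Equiv.Perm.sign (d.subtypePerm (p := fun x => (b x).isRight = true) hprd) = Equiv.Perm.sign d :=
          Equiv.Perm.sign_subtypePerm d hprd h2d
        rw [hsd, hd.sign, hdsupp, hcard, hστ]
        push_cast
        rw [neg_one_pow_sub_one ha]
        simp
    exact main _ _
  · rw [dif_neg hA, dif_neg (fun hB => hA (hAB.mpr hB)), mul_zero]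



theorem fix_mem_iff {α : Type*} [DecidableEq α] (σ : Equiv.Perm α) (S : Finset α)
    (h : ∀ t ∈ S, σ t = t) : ∀ t, t ∉ S ↔ σ t ∉ S := by
  have key : ∀ t, σ t ∈ S ↔ t ∈ S := by
    intro t
    constructor
    · intro hσ
      have h2 : σ (σ t) = σ t := h _ hσ
      have := σ.injective h2
      rwa [this] at hσ
    · intro ht
      rw [h t ht]; exact ht
  intro t
  rw [not_iff_not, iff_comm]
  exact (key t)

theorem cycleType_permCongr {α β : Type*} [Fintype α] [DecidableEq α] [Fintype β] [DecidableEq β]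
    (e : α ≃ β) (σ : Equiv.Perm α) : (e.permCongr σ).cycleType = σ.cycleType := by
  have hf : (e.permCongr σ) = σ.extendDomain
      (e.trans (Equiv.subtypeUnivEquiv (fun _ : β => trivial)).symm) := by
    ext x
    rw [Equiv.Perm.extendDomain_apply_subtype _ _ (trivial)]
    simp [Equiv.permCongr_apply, Equiv.subtypeUnivEquiv]
  rw [hf, Equiv.Perm.cycleType_extendDomain]

theorem cycleType_subtypePerm_of_fix {α : Type*} [Fintype α] [DecidableEq α]
    (σ : Equiv.Perm α) (S : Finset α) (h : ∀ t ∈ S, σ t = t)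
    (hmem : ∀ t, t ∉ S ↔ σ t ∉ S) :
    (σ.subtypePerm (p := fun t => t ∉ S) (fun t => (hmem t).symm)).cycleType = σ.cycleType := by
  have : Equiv.Perm.ofSubtype (σ.subtypePerm (p := fun t => t ∉ S) (fun t => (hmem t).symm)) = σ :=
    Equiv.Perm.ofSubtype_subtypePerm _ (fun x hx => by
      intro hxS
      exact hx (h x hxS))
  conv_rhs => rw [← this]
  rw [Equiv.Perm.cycleType_ofSubtype]



theorem card_blockStab {m : ℕ} {V : Type*} [Fintype V] [DecidableEq V] (β : Fin m → V) :
    Nat.card {σ : Equiv.Perm (Fin m) // ∀ x, β (σ x) = β x}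
      = ∏ v : V, ((univ.filter fun x => β x = v).card).factorial := by
  rw [Nat.card_eq_fintype_card]
  have he : {σ : Equiv.Perm (Fin m) // ∀ x, β (σ x) = β x} ≃ {σ : Equiv.Perm (Fin m) // β ∘ σ = β} :=
    Equiv.subtypeEquivRight (fun σ => by
      constructor
      · intro h; funext x; exact h x
      · intro h x; exact congrFun h x)
  rw [Fintype.card_congr he, DomMulAct.stabilizer_card]
  refine Finset.prod_congr rfl (fun v _ => ?_)
  rw [Fintype.card_subtype]



/-- Murnaghan–Nakayama recursion for the induced characters `ψ_{(λ∣μ)}`. -/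
theorem psi_MN_recursion (n k l a : ℕ) (ha : 0 < a)
    (ν : List ℕ) (hν : IsPartitionOf n ν) (hmem : a ∈ ν)
    (νh : List ℕ) (hνh : IsPartitionOf (n - a) νh)
    (hrem : (↑ν : Multiset ℕ) = a ::ₘ (↑νh : Multiset ℕ))
    (lam : Fin k → ℕ) (mu : Fin l → ℕ) (hsum : ∑ i, lam i + ∑ j, mu j = n)
    (b : Fin n → Fin k ⊕ Fin l)
    (hbl : ∀ i, (Finset.univ.filter fun x => b x = Sum.inl i).card = lam i)
    (hbr : ∀ j, (Finset.univ.filter fun x => b x = Sum.inr j).card = mu j)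
    (b' : Fin k ⊕ Fin l → Fin (n - a) → Fin k ⊕ Fin l)
    (hb'l : ∀ i, a ≤ lam i →
      (∀ i', (Finset.univ.filter fun x => b' (Sum.inl i) x = Sum.inl i').card
          = Function.update lam i (lam i - a) i') ∧
      (∀ j', (Finset.univ.filter fun x => b' (Sum.inl i) x = Sum.inr j').card = mu j'))
    (hb'r : ∀ j, a ≤ mu j →
      (∀ i', (Finset.univ.filter fun x => b' (Sum.inr j) x = Sum.inl i').card = lam i') ∧
      (∀ j', (Finset.univ.filter fun x => b' (Sum.inr j) x = Sum.inr j').card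
          = Function.update mu j (mu j - a) j'))
    (g : Equiv.Perm (Fin n)) (hg : g.cycleType = ↑ν)
    (g' : Equiv.Perm (Fin (n - a))) (hg' : g'.cycleType = ↑νh) :
    psiVal b g =
      (∑ i ∈ Finset.univ.filter (fun i => a ≤ lam i), psiVal (b' (Sum.inl i)) g')
      + (-1 : ℚ) ^ (a - 1) *
        ∑ j ∈ Finset.univ.filter (fun j => a ≤ mu j), psiVal (b' (Sum.inr j)) g' := by
  classical
  obtain ⟨c, hcmem, hccard⟩ : ∃ c ∈ g.cycleFactorsFinset, c.support.card = a := by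
    have hga : a ∈ g.cycleType := by
      rw [hg, hrem]; exact Multiset.mem_cons_self _ _
    rw [Equiv.Perm.cycleType_def, Multiset.mem_map] at hga
    obtain ⟨c, hc1, hc2⟩ := hga
    exact ⟨c, hc1, hc2⟩
  set P : Finset (Fin n) := c.support with hP
  have hPcard : Fintype.card {t : Fin n // t ∈ P} = a := by
    rw [Fintype.card_coe]; exact hccard
  have hPccard : Fintype.card {t : Fin n // t ∉ P} = n - a := by
    rw [Fintype.card_subtype_compl, Fintype.card_fin, Fintype.card_coe, hccard]
  let D : {t : Fin n // t ∉ P} ≃ Fin (n - a) := Fintype.equivFinOfCardEq hPccard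
  set g₂ : Equiv.Perm (Fin n) := g * c⁻¹ with hg₂def
  have hdisj : Equiv.Perm.Disjoint g₂ c :=
    Equiv.Perm.disjoint_mul_inv_of_mem_cycleFactorsFinset hcmem
  have hcg₂ : c * g₂ = g := by
    rw [← hdisj.commute.eq, hg₂def, inv_mul_cancel_right]
  have hg₂fix : ∀ t ∈ P, g₂ t = t := by
    intro t ht
    rcases hdisj t with h | h
    · exact h
    · exact absurd h (Equiv.Perm.mem_support.mp ht)
  have hg₂mem : ∀ t : Fin n, t ∉ P ↔ g₂ t ∉ P := fix_mem_iff g₂ P hg₂fix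
  have hg₂type : g₂.cycleType = (↑νh : Multiset ℕ) := by
    rw [hg₂def, Equiv.Perm.cycleType_mul_inv_mem_cycleFactorsFinset_eq_sub hcmem, hg,
      (Equiv.Perm.mem_cycleFactorsFinset_iff.mp hcmem).1.cycleType, hccard, hrem]
    simp [Multiset.sub_cons]
  set g₁ : Equiv.Perm (Fin (n - a)) := D.permCongr (g₂.subtypePerm (fun t => (hg₂mem t).symm)) with hg₁def
  have hg₁conj : IsConj g₁ g' := by
    apply Equiv.Perm.isConj_of_cycleType_eq
    rw [hg', hg₁def, cycleType_permCongr, cycleType_subtypePerm_of_fix g₂ P hg₂fix hg₂mem, hg₂type]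
  set Num : (Fin k ⊕ Fin l) → ℚ :=
    fun v => ∑ z : Equiv.Perm (Fin (n - a)), signOnPrimes (b' v) (z⁻¹ * g' * z) with hNum
  set ε : (Fin k ⊕ Fin l) → ℚ := Sum.elim (fun _ => (1:ℚ)) (fun _ => (-1:ℚ)^(a-1)) with hε
  set fib : (Fin k ⊕ Fin l) → ℕ := fun v => (univ.filter fun x => b x = v).card with hfib
  -- Step A+B+C+D : numerator evaluation

  have hblockzpow : ∀ (σ : Equiv.Perm (Fin n)), (∀ t, b (σ t) = b t) →
      ∀ (m : ℤ) (t : Fin n), b ((σ ^ m) t) = b t := by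
    intro σ hσ
    have hnat : ∀ (m : ℕ) (t : Fin n), b ((σ ^ m) t) = b t := by
      intro m
      induction m with
      | zero => intro t; simp
      | succ mm ih => intro t; rw [pow_succ, Equiv.Perm.mul_apply, ih (σ t), hσ t]
    have hinv : ∀ t : Fin n, b (σ⁻¹ t) = b t := by
      intro t
      conv_rhs => rw [← (show σ (σ⁻¹ t) = t from σ.apply_symm_apply t), hσ]
    intro m t
    rcases m with m | m
    · exact hnat m t
    · rw [zpow_negSucc]
      have : ∀ (mm : ℕ) (t : Fin n), b ((σ ^ (mm+1))⁻¹ t) = b t := by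
        intro mm
        induction mm with
        | zero => intro t; simpa using hinv t
        | succ mmm ih =>
          intro t
          rw [pow_succ, mul_inv_rev, Equiv.Perm.mul_apply, hinv, ih]
      exact this m t
  have hnumer : ∑ x : Equiv.Perm (Fin n), signOnPrimes b (x⁻¹ * g * x)
      = ∑ v : Fin k ⊕ Fin l, ((fib v).descFactorial a : ℚ) * (ε v * Num v) := by
    have hne : Nonempty {t : Fin n // t ∈ P} := by
      rw [← Fintype.card_pos_iff, hPcard]; exact ha
    obtain ⟨p0⟩ := hne
    rw [← Finset.sum_fiberwise_of_maps_to
      (t := (univ : Finset ({t : Fin n // t ∈ P} → Fin n)))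
      (g := fun x : Equiv.Perm (Fin n) => (fun p : {t : Fin n // t ∈ P} => x⁻¹ p.val))
      (fun x _ => mem_univ _) (fun x => signOnPrimes b (x⁻¹ * g * x))]
    have hAu : ∀ u : {t : Fin n // t ∈ P} → Fin n,
        (∑ x ∈ univ.filter
            (fun x : Equiv.Perm (Fin n) => (fun p : {t : Fin n // t ∈ P} => x⁻¹ p.val) = u),
          signOnPrimes b (x⁻¹ * g * x))
        = ∑ v : Fin k ⊕ Fin l,
            if (Function.Injective u ∧ ∀ p, b (u p) = v) then ε v * Num v else 0 := by
      intro u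
      by_cases hgood : ∃ v, Function.Injective u ∧ ∀ p, b (u p) = v
      · obtain ⟨v, hinj, hv⟩ := hgood
        have huniq : ∀ w, (Function.Injective u ∧ ∀ p, b (u p) = w) ↔ w = v := by
          intro w
          constructor
          · rintro ⟨-, hw⟩; rw [← hw p0, hv p0]
          · rintro rfl; exact ⟨hinj, hv⟩
        rw [Finset.sum_congr rfl (fun w _ => if_congr (huniq w) rfl rfl),
          Finset.sum_ite_eq' univ v, if_pos (mem_univ v)]

        -- the core fiber computation
        set S : Finset (Fin n) := univ.image (fun p : {t : Fin n // t ∈ P} => u p) with hSdef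
        have hmemS : ∀ t : Fin n, t ∈ S ↔ ∃ p, u p = t := by
          intro t; rw [hSdef]; simp [Finset.mem_image]
        have hScard : S.card = a := by
          rw [hSdef, Finset.card_image_of_injective _ hinj, card_univ, hPcard]
        have hSb : ∀ t ∈ S, b t = v := by
          intro t ht; obtain ⟨p, rfl⟩ := (hmemS t).mp ht; exact hv p
        have hSccard : Fintype.card {t : Fin n // t ∉ S} = n - a := by
          rw [Fintype.card_subtype_compl, Fintype.card_fin, Fintype.card_coe, hScard]
        let E : {t : Fin n // t ∉ S} ≃ Fin (n - a) := Fintype.equivFinOfCardEq hSccard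
        set β : Fin (n - a) → Fin k ⊕ Fin l := fun w => b (E.symm w).val with hβdef
        have hva : a ≤ fib v := by
          rw [hfib, ← hScard]
          exact Finset.card_le_card (fun t ht => mem_filter.mpr ⟨mem_univ t, hSb t ht⟩)
        -- fibers of β agree with those of b' v
        have hβfib : ∀ w, (univ.filter fun z => β z = w).card
            = (univ.filter fun z => b' v z = w).card := by
          have hcart : ∀ w, (univ.filter fun z => β z = w).card
              = ((univ.filter fun t : Fin n => b t = w) \ S).card := by
            intro w
            refine Finset.card_nbij (fun z => (E.symm z).val) ?_ ?_ ?_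
            · intro z hz
              rw [Finset.mem_coe, mem_filter] at hz
              exact Finset.mem_sdiff.mpr
                ⟨mem_filter.mpr ⟨mem_univ _, hz.2⟩, (E.symm z).2⟩
            · intro z1 _ z2 _ h12
              exact E.symm.injective (Subtype.coe_injective h12)
            · intro t ht
              rw [Finset.coe_sdiff, Set.mem_diff] at ht
              obtain ⟨ht1, ht2⟩ := ht
              have hbw : b t = w := (mem_filter.mp ht1).2
              refine ⟨E ⟨t, ht2⟩, ?_, ?_⟩
              · simp only [Finset.coe_filter, Set.mem_setOf_eq, mem_univ, true_and, hβdef,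
                  Equiv.symm_apply_apply]
                exact hbw
              · simp only [Equiv.symm_apply_apply]
          have hSsub : ∀ w, w = v →
              S ⊆ univ.filter fun t : Fin n => b t = w := by
            intro w hw t ht
            exact mem_filter.mpr ⟨mem_univ t, hw ▸ hSb t ht⟩
          have hdisjw : ∀ w, w ≠ v →
              (univ.filter fun t : Fin n => b t = w) \ S
                = univ.filter fun t : Fin n => b t = w := by
            intro w hw
            rw [Finset.sdiff_eq_self_iff_disjoint]
            rw [Finset.disjoint_left]
            intro t ht htS
            exact hw (((mem_filter.mp ht).2).symm.trans (hSb t htS) ▸ rfl)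
          rcases v with i | j
          · have hia : a ≤ lam i := by rw [← hbl i]; exact hva.trans_eq (by rw [hfib])
            intro w
            rw [hcart w]
            rcases w with i' | j'
            · rw [(hb'l i hia).1 i']
              by_cases hii : i' = i
              · subst hii
                rw [Finset.card_sdiff_of_subset (hSsub _ rfl), hScard, hbl, Function.update_self]
              · rw [hdisjw _ (by simp [hii]), hbl, Function.update_of_ne hii]
            · rw [(hb'l i hia).2 j', hdisjw _ (by simp), hbr]
          · have hja : a ≤ mu j := by rw [← hbr j]; exact hva.trans_eq (by rw [hfib])
            intro w
            rw [hcart w]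
            rcases w with i' | j'
            · rw [(hb'r j hja).1 i', hdisjw _ (by simp), hbl]
            · rw [(hb'r j hja).2 j']
              by_cases hjj : j' = j
              · subst hjj
                rw [Finset.card_sdiff_of_subset (hSsub _ rfl), hScard, hbr, Function.update_self]
              · rw [hdisjw _ (by simp [hjj]), hbr, Function.update_of_ne hjj]
        obtain ⟨π, hπ⟩ := exists_perm_comp β (b' v) hβfib
        -- the bijection machinery
        have hbijuS : Function.Bijective (fun p : {t : Fin n // t ∈ P} =>
            (⟨u p, (hmemS _).mpr ⟨p, rfl⟩⟩ : {t : Fin n // t ∈ S})) := by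
          rw [Fintype.bijective_iff_injective_and_card]
          constructor
          · intro p q hpq
            exact hinj (congrArg Subtype.val hpq)
          · rw [hPcard, Fintype.card_coe, hScard]
        set uS : {t : Fin n // t ∈ P} ≃ {t : Fin n // t ∈ S} :=
          Equiv.ofBijective _ hbijuS with huS
        set Θ : Equiv.Perm (Fin (n - a)) → Equiv.Perm (Fin n) := fun z =>
          (((Equiv.sumCompl (fun t => t ∈ P)).symm.trans
            ((Equiv.sumCongr uS (D.trans (z.trans E.symm))).trans
              (Equiv.sumCompl (fun t => t ∈ S)))).symm : Equiv.Perm (Fin n)) with hΘ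
        have hΘinv1 : ∀ z (t : Fin n) (ht : t ∈ P), (Θ z)⁻¹ t = u ⟨t, ht⟩ := by
          intro z t ht
          show ((Θ z).symm : Fin n → Fin n) t = u ⟨t, ht⟩
          rw [hΘ]
          simp only [Equiv.symm_symm, Equiv.trans_apply,
            Equiv.sumCompl_symm_apply_of_pos ht, Equiv.sumCongr_apply, Sum.map_inl,
            Equiv.sumCompl_apply_inl]
          rfl
        have hΘinv2 : ∀ z (t : Fin n) (ht : t ∉ P),
            (Θ z)⁻¹ t = (E.symm (z (D ⟨t, ht⟩))).val := by
          intro z t ht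
          show ((Θ z).symm : Fin n → Fin n) t = _
          rw [hΘ]
          simp only [Equiv.symm_symm, Equiv.trans_apply,
            Equiv.sumCompl_symm_apply_of_neg ht, Equiv.sumCongr_apply, Sum.map_inr,
            Equiv.sumCompl_apply_inr]
        have hΘapp2 : ∀ z (t : Fin n) (ht : t ∉ S),
            (Θ z) t = (D.symm (z⁻¹ (E ⟨t, ht⟩))).val := by
          intro z t ht
          rw [hΘ]
          simp only [Equiv.symm_trans_apply, Equiv.symm_symm,
            Equiv.sumCompl_symm_apply_of_neg ht, Equiv.sumCongr_symm,
            Equiv.sumCongr_apply, Sum.map_inr, Equiv.sumCompl_apply_inr]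
          rfl
        have hfbΘ : ∀ z (p : {t : Fin n // t ∈ P}), (Θ z)⁻¹ p.val = u p := by
          intro z p
          rw [hΘinv1 z p.val p.2]
        have hstep1 : ∑ x ∈ univ.filter (fun x : Equiv.Perm (Fin n) =>
            (fun p : {t : Fin n // t ∈ P} => x⁻¹ p.val) = u), signOnPrimes b (x⁻¹ * g * x)
            = ∑ z : Equiv.Perm (Fin (n - a)), ε v * signOnPrimes β (z * g₁ * z⁻¹) := by
          refine (Finset.sum_nbij (i := Θ) ?_ ?_ ?_ ?_).symm
          · intro z _
            exact mem_filter.mpr ⟨mem_univ _, funext fun p => hfbΘ z p⟩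
          · intro z1 _ z2 _ h12
            ext w
            have h1 := hΘinv2 z1 (D.symm w).val (D.symm w).2
            have h2 := hΘinv2 z2 (D.symm w).val (D.symm w).2
            rw [h12] at h1
            rw [h1] at h2
            have h3 := E.symm.injective (Subtype.coe_injective h2.symm)
            have h4 : D ⟨(D.symm w).val, (D.symm w).2⟩ = w := by
              rw [Subtype.coe_eta, Equiv.apply_symm_apply]
            rw [h4] at h3
            rw [h3]
          · intro x hx
            simp only [Finset.coe_filter, Set.mem_setOf_eq] at hx
            have hxu : ∀ p : {t : Fin n // t ∈ P}, x⁻¹ p.val = u p :=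
              fun p => congrFun hx.2 p
            have hmemx : ∀ t : Fin n, (t ∉ P) ↔ ((x⁻¹ : Equiv.Perm (Fin n)) t ∉ S) := by
              intro t
              constructor
              · intro ht hS'
                obtain ⟨p, hp⟩ := (hmemS _).mp hS'
                rw [← hxu p] at hp
                exact ht ((x⁻¹).injective hp ▸ p.2)
              · intro hS' ht
                exact hS' ((hxu ⟨t, ht⟩) ▸ (hmemS _).mpr ⟨⟨t, ht⟩, rfl⟩)
            set z : Equiv.Perm (Fin (n - a)) :=
              (D.symm.trans ((Equiv.subtypeEquiv (x⁻¹ : Equiv.Perm (Fin n)) hmemx).trans E) :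
                Fin (n - a) ≃ Fin (n - a)) with hz
            refine ⟨z, by simp, ?_⟩
            have hinveq : (Θ z)⁻¹ = x⁻¹ := by
              ext t
              by_cases ht : t ∈ P
              · rw [hΘinv1 z t ht, ← hxu ⟨t, ht⟩]
              · rw [hΘinv2 z t ht, hz]
                simp only [Equiv.trans_apply, Equiv.symm_apply_apply]
                rfl
            exact inv_injective hinveq
          · intro z _
            set x : Equiv.Perm (Fin n) := Θ z with hxdef
            set d : Equiv.Perm (Fin n) := x⁻¹ * c * x with hd_def
            set τ : Equiv.Perm (Fin n) := x⁻¹ * g₂ * x with hτ_def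
            have hdt : x⁻¹ * g * x = d * τ := by
              rw [hd_def, hτ_def, ← hcg₂]
              group
            have hccyc : c.IsCycle := (Equiv.Perm.mem_cycleFactorsFinset_iff.mp hcmem).1
            have hdform : d = x⁻¹ * c * (x⁻¹)⁻¹ := by rw [inv_inv]
            have hd : d.IsCycle := by rw [hdform]; exact hccyc.conj
            have hdsupp : d.support = S := by
              rw [hdform, Equiv.Perm.support_conj]
              ext t
              simp only [Finset.mem_map, Equiv.coe_toEmbedding]
              rw [hmemS t]
              constructor
              · rintro ⟨p, hp, rfl⟩
                exact ⟨⟨p, hP ▸ hp⟩, (hfbΘ z ⟨p, hP ▸ hp⟩).symm ▸ rfl⟩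
              · rintro ⟨p, rfl⟩
                exact ⟨p.val, hP ▸ p.2, hfbΘ z p⟩
            have hτfix : ∀ t ∈ S, τ t = t := by
              intro t ht
              obtain ⟨p, rfl⟩ := (hmemS t).mp ht
              rw [← hfbΘ z p, hτ_def, ← hxdef]
              simp only [Equiv.Perm.mul_apply,
                  (fun (f : Equiv.Perm (Fin n)) y => show f (f⁻¹ y) = y from f.apply_symm_apply y)]
              rw [hg₂fix p.val p.2]
            have hτmem := fix_mem_iff τ S hτfix
            have key := signOnPrimes_cycle_mul ha b v S hSb hScard d hd hdsupp τ hτfix hτmem E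
            rw [hdt, key]
            congr 1
            have hEτ : E.permCongr (τ.subtypePerm (fun t => (hτmem t).symm)) = z * g₁ * z⁻¹ := by
              ext w
              simp only [Equiv.permCongr_apply, Equiv.Perm.subtypePerm_apply,
                Equiv.Perm.mul_apply]
              have hx1 : x ((E.symm w) : Fin n) = (D.symm (z⁻¹ (E ⟨((E.symm w) : Fin n),
                  (E.symm w).2⟩))).val := hΘapp2 z _ (E.symm w).2
              have hx1' : x ((E.symm w) : Fin n) = (D.symm (z⁻¹ w)).val := by
                rw [hx1, Subtype.coe_eta, Equiv.apply_symm_apply]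
              have hr : g₂ ((D.symm (z⁻¹ w)).val) ∉ P :=
                (hg₂mem _).mp (D.symm (z⁻¹ w)).2
              have hτw : τ ((E.symm w) : Fin n)
                  = (E.symm (z (D ⟨g₂ ((D.symm (z⁻¹ w)).val), hr⟩))).val := by
                rw [hτ_def]
                simp only [Equiv.Perm.mul_apply]
                rw [hx1']
                exact hΘinv2 z _ hr
              have hsub : (⟨τ ((E.symm w) : Fin n), (hτmem _).mp (E.symm w).2⟩ :
                  {t : Fin n // t ∉ S}) = E.symm (z (D ⟨g₂ ((D.symm (z⁻¹ w)).val), hr⟩)) :=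
                Subtype.ext (by exact hτw)
              rw [hsub, Equiv.apply_symm_apply]
              have hg1w : g₁ (z⁻¹ w) = D ⟨g₂ ((D.symm (z⁻¹ w)).val), hr⟩ := by
                rw [hg₁def]
                rfl
              rw [hg1w]
            rw [hEτ]
        rw [hstep1, ← Finset.mul_sum]
        have hstep2 : ∑ z : Equiv.Perm (Fin (n-a)), signOnPrimes β (z * g₁ * z⁻¹)
            = ∑ z : Equiv.Perm (Fin (n-a)), signOnPrimes β (z⁻¹ * g₁ * z) := by
          refine Fintype.sum_equiv (Equiv.inv _) _ _ (fun z => ?_)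
          simp
        rw [hstep2, sum_signOnPrimes_conj β hg₁conj]
        congr 1
        rw [hNum]
        simp only
        rw [← hπ]
        exact (sum_signOnPrimes_comp β π g').symm
      · rw [Finset.sum_eq_zero (fun w _ => if_neg (fun h => hgood ⟨w, h⟩))]
        refine Finset.sum_eq_zero (fun x hx => ?_)
        · -- each term in the fiber vanishes
          rw [mem_filter] at hx
          have hxu := hx.2
          by_cases hinj : Function.Injective u
          · -- b ∘ u is not constant, so the conjugate cannot preserve blocks
            rw [signOnPrimes, dif_neg]
            intro hpres
            refine hgood ⟨b (u p0), hinj, fun p => ?_⟩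
            -- same cycle argument
            have hsc : ∃ m : ℤ, (g ^ m) p0.val = p.val := by
              have hc0 : c = g.cycleOf p0.val := Equiv.Perm.cycle_is_cycleOf p0.2 hcmem
              have hp : (p : Fin n) ∈ (g.cycleOf p0.val).support := by rw [← hc0]; exact p.2
              rw [Equiv.Perm.mem_support_cycleOf_iff] at hp
              exact hp.1
            obtain ⟨m, hm⟩ := hsc
            have hconj : ∀ (t : Fin n), ((x⁻¹ * g * x)^m) (x⁻¹ t) = x⁻¹ ((g ^ m) t) := by
              intro t
              have hc2 : (x⁻¹ * g * x)^m = x⁻¹ * g ^ m * x := by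
                rw [show x⁻¹ * g * x = x⁻¹ * g * (x⁻¹)⁻¹ by rw [inv_inv], conj_zpow, inv_inv]
              rw [hc2]
              simp [Equiv.Perm.mul_apply]
            have hbb := hblockzpow _ hpres m (x⁻¹ p0.val)
            rw [hconj p0.val, hm] at hbb
            have hxu0 : x⁻¹ p0.val = u p0 := congrFun hxu p0
            have hxup : x⁻¹ p.val = u p := congrFun hxu p
            rw [hxup, hxu0] at hbb
            exact hbb
          · -- non-injective u : the fiber is empty
            exfalso
            apply hinj
            intro p q hpq
            have hp : x⁻¹ p.val = u p := congrFun hxu p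
            have hq : x⁻¹ q.val = u q := congrFun hxu q
            apply Subtype.ext
            apply x⁻¹.injective
            rw [hp, hq, hpq]
    rw [Finset.sum_congr rfl (fun u _ => hAu u), Finset.sum_comm]
    refine Finset.sum_congr rfl (fun v _ => ?_)
    rw [← Finset.sum_filter, Finset.sum_const, nsmul_eq_mul]
    congr 1
    -- counting : number of good u equals the descending factorial
    have : (univ.filter (fun u : {t : Fin n // t ∈ P} → Fin n =>
        Function.Injective u ∧ ∀ p, b (u p) = v)).card = (fib v).descFactorial a := by
      rw [← Fintype.card_subtype]
      have e : {u : {t : Fin n // t ∈ P} → Fin n //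
          Function.Injective u ∧ ∀ p, b (u p) = v}
          ≃ ({t : Fin n // t ∈ P} ↪ {x : Fin n // b x = v}) := by
        refine ⟨fun u => ⟨fun p => ⟨u.val p, u.2.2 p⟩,
            fun p q h => u.2.1 (congrArg Subtype.val h)⟩,
          fun f => ⟨fun p => (f p).val,
            ⟨fun p q h => f.injective (Subtype.ext h), fun p => (f p).2⟩⟩,
          fun u => rfl, fun f => by ext p : 2 <;> rfl⟩
      rw [Fintype.card_congr e, Fintype.card_embedding_eq, Fintype.card_subtype, hPcard]
    rw [this]

  -- Step E : final arithmetic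
  have hdesc_ne : ∀ {mm : ℕ}, a ≤ mm → ((mm.descFactorial a : ℚ) ≠ 0) := by
    intro mm hm
    have : mm.descFactorial a ≠ 0 := by
      intro h0
      exact absurd (Nat.descFactorial_eq_zero_iff_lt.mp h0) (not_lt.mpr hm)
    exact_mod_cast this
  have hHb : Nat.card {σ : Equiv.Perm (Fin n) // ∀ x, b (σ x) = b x}
      = (∏ i, (lam i).factorial) * ∏ j, (mu j).factorial := by
    rw [card_blockStab, Fintype.prod_sum_type]
    congr 1
    · exact Finset.prod_congr rfl fun i _ => by rw [hbl]
    · exact Finset.prod_congr rfl fun j _ => by rw [hbr]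
  have hHl : ∀ i, a ≤ lam i →
      (lam i).descFactorial a * Nat.card {σ : Equiv.Perm (Fin (n-a)) //
          ∀ x, b' (Sum.inl i) (σ x) = b' (Sum.inl i) x}
        = (∏ i', (lam i').factorial) * ∏ j, (mu j).factorial := by
    intro i hia
    rw [card_blockStab, Fintype.prod_sum_type]
    rw [show (∏ i' : Fin k, ((univ.filter fun x => b' (Sum.inl i) x = Sum.inl i').card).factorial)
        = ∏ i', ((Function.update lam i (lam i - a)) i').factorial from
      Finset.prod_congr rfl fun i' _ => by rw [(hb'l i hia).1]]
    rw [show (∏ j' : Fin l, ((univ.filter fun x => b' (Sum.inl i) x = Sum.inr j').card).factorial)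
        = ∏ j', (mu j').factorial from
      Finset.prod_congr rfl fun j' _ => by rw [(hb'l i hia).2]]
    have hupd : ∀ i', ((Function.update lam i (lam i - a)) i').factorial
        = Function.update (fun i' => (lam i').factorial) i ((lam i - a).factorial) i' := by
      intro i'
      by_cases h : i' = i
      · subst h; simp
      · simp [Function.update_of_ne h]
    rw [Finset.prod_congr rfl (fun i' _ => hupd i'), Finset.prod_update_of_mem (mem_univ i)]
    have hfd := Nat.factorial_mul_descFactorial hia
    conv_rhs => rw [← Finset.mul_prod_erase univ _ (mem_univ i), Finset.erase_eq, ← hfd]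
    ring
  have hHr : ∀ j, a ≤ mu j →
      (mu j).descFactorial a * Nat.card {σ : Equiv.Perm (Fin (n-a)) //
          ∀ x, b' (Sum.inr j) (σ x) = b' (Sum.inr j) x}
        = (∏ i', (lam i').factorial) * ∏ j', (mu j').factorial := by
    intro j hja
    rw [card_blockStab, Fintype.prod_sum_type]
    rw [show (∏ i' : Fin k, ((univ.filter fun x => b' (Sum.inr j) x = Sum.inl i').card).factorial)
        = ∏ i', (lam i').factorial from
      Finset.prod_congr rfl fun i' _ => by rw [(hb'r j hja).1]]
    rw [show (∏ j' : Fin l, ((univ.filter fun x => b' (Sum.inr j) x = Sum.inr j').card).factorial)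
        = ∏ j', ((Function.update mu j (mu j - a)) j').factorial from
      Finset.prod_congr rfl fun j' _ => by rw [(hb'r j hja).2]]
    have hupd : ∀ j', ((Function.update mu j (mu j - a)) j').factorial
        = Function.update (fun j' => (mu j').factorial) j ((mu j - a).factorial) j' := by
      intro j'
      by_cases h : j' = j
      · subst h; simp
      · simp [Function.update_of_ne h]
    rw [Finset.prod_congr rfl (fun j' _ => hupd j'), Finset.prod_update_of_mem (mem_univ j)]
    have hfd := Nat.factorial_mul_descFactorial hja
    conv_rhs => rw [← Finset.mul_prod_erase univ (fun j' => (mu j').factorial) (mem_univ j), Finset.erase_eq, ← hfd]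
    ring
  have hpsi : ∀ v, psiVal (b' v) g'
      = Num v / (Nat.card {σ : Equiv.Perm (Fin (n-a)) // ∀ x, b' v (σ x) = b' v x} : ℚ) :=
    fun v => rfl
  have hsplit : (∑ v : Fin k ⊕ Fin l, ((fib v).descFactorial a : ℚ) * (ε v * Num v))
      = (∑ i, ((lam i).descFactorial a : ℚ) * Num (Sum.inl i))
        + (-1:ℚ)^(a-1) * ∑ j, ((mu j).descFactorial a : ℚ) * Num (Sum.inr j) := by
    rw [Fintype.sum_sum_type, Finset.mul_sum]
    congr 1
    · exact sum_congr rfl fun i _ => by simp [hε, hfib, hbl]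
    · refine sum_congr rfl fun j _ => ?_
      simp only [hε, hfib, Sum.elim_inr, hbr]
      ring
  rw [psiVal, hnumer, hsplit, hHb, add_div, Finset.sum_div, mul_div_assoc, Finset.sum_div]
  congr 1
  · rw [Finset.sum_filter]
    refine sum_congr rfl fun i _ => ?_
    by_cases hia : a ≤ lam i
    · rw [if_pos hia, hpsi, ← hHl i hia]
      push_cast
      rw [mul_div_mul_left _ _ (hdesc_ne hia)]
    · rw [if_neg hia, Nat.descFactorial_eq_zero_iff_lt.mpr (not_le.mp hia)]
      simp
  · congr 1
    rw [Finset.sum_filter]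
    refine sum_congr rfl fun j _ => ?_
    by_cases hja : a ≤ mu j
    · rw [if_pos hja, hpsi, ← hHr j hja]
      push_cast
      rw [mul_div_mul_left _ _ (hdesc_ne hja)]
    · rw [if_neg hja, Nat.descFactorial_eq_zero_iff_lt.mpr (not_le.mp hja)]
      simp

end Regev
end

section
/- For any $n \ge 1$ and any partition $\nu$ of $n$ of length $r$, the sum over all $a$ with $0 \le a \le n$ of the values at cycle type $\nu$ of the characters induced from $\mathfrak{S}_a \times \mathfrak{S}_{n-a}$ of (trivial $\boxtimes$ sign) equals $2^r$ if all parts of $\nu$ are odd, and $0$ otherwise. -/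
open MvPolynomial Finset

namespace Regev

lemma sum11_eq {s t : Fin 1 ⊕ Fin 1} (h : s.isLeft = t.isLeft) : s = t := by
  rcases s with i | i <;> rcases t with j | j <;> simp_all [Subsingleton.elim i j]
lemma bool_eq_of_iff {a b : Bool} (h : a = true ↔ b = true) : a = b := by
  rcases a <;> rcases b <;> simp_all
noncomputable def Ginv {n : ℕ} (g : Equiv.Perm (Fin n)) (A : Finset (Fin n)) : ℚ :=
  if h : ∀ x, g x ∈ A ↔ x ∈ A then
    ((Equiv.Perm.sign (g.subtypePerm (p := fun x => x ∉ A)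
      (fun x => not_iff_not.mpr (h x))) : ℤ) : ℚ)
  else 0
lemma map_eq_iff {n : ℕ} (σ : Equiv.Perm (Fin n)) (A : Finset (Fin n)) :
    A.map σ.toEmbedding = A ↔ ∀ x, σ x ∈ A ↔ x ∈ A := by
  constructor
  · intro h x
    conv_lhs => rw [← h]
    rw [Finset.mem_map_equiv]; simp
  · intro h; ext z; rw [Finset.mem_map_equiv]
    simpa using (h (σ.symm z)).symm
lemma exists_perm_map {n : ℕ} (A₀ A : Finset (Fin n)) (h : A₀.card = A.card) :
    ∃ x : Equiv.Perm (Fin n), A₀.map x.toEmbedding = A := by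
  classical
  have h1 : Fintype.card {z : Fin n // z ∈ A₀} = Fintype.card {z : Fin n // z ∈ A} := by
    simp only [Fintype.card_coe, h]
  have h2 : Fintype.card {z : Fin n // ¬ z ∈ A₀} = Fintype.card {z : Fin n // ¬ z ∈ A} := by
    rw [Fintype.card_subtype_compl, Fintype.card_subtype_compl, h1]
  set e₁ := Fintype.equivOfCardEq h1
  set e₂ := Fintype.equivOfCardEq h2
  set x : Equiv.Perm (Fin n) :=
    (Equiv.sumCompl (· ∈ A₀)).symm.trans ((e₁.sumCongr e₂).trans (Equiv.sumCompl (· ∈ A)))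
  refine ⟨x, ?_⟩
  have hsub : A₀.map x.toEmbedding ⊆ A := by
    intro z hz
    rw [Finset.mem_map] at hz
    obtain ⟨y, hy, rfl⟩ := hz
    show x y ∈ A
    have : x y = (e₁ ⟨y, hy⟩ : Fin n) := by
      simp [x, Equiv.sumCompl_symm_apply_of_pos hy]
    rw [this]
    exact (e₁ ⟨y, hy⟩).2
  exact Finset.eq_of_subset_of_card_le hsub (by rw [Finset.card_map, h])

lemma signOnPrimes_conj {n : ℕ} (b : Fin n → Fin 1 ⊕ Fin 1) (g x : Equiv.Perm (Fin n)) :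
    signOnPrimes b (x⁻¹ * g * x)
      = Ginv g ((Finset.univ.filter fun z => (b z).isLeft = true).map x.toEmbedding) := by
  classical
  set A₀ : Finset (Fin n) := Finset.univ.filter fun z => (b z).isLeft = true with hA₀
  set A : Finset (Fin n) := A₀.map x.toEmbedding with hA
  have hmem0 : ∀ z, z ∈ A₀ ↔ (b z).isLeft = true := by intro z; simp [hA₀]
  have hmemA : ∀ z, z ∈ A ↔ (b (x.symm z)).isLeft = true := by
    intro z; rw [hA, Finset.mem_map_equiv, hmem0]
  have happ : ∀ y, (x⁻¹ * g * x) y = x.symm (g (x y)) := by intro y; rfl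
  have hcond : (∀ y, b ((x⁻¹ * g * x) y) = b y) ↔ (∀ z, g z ∈ A ↔ z ∈ A) := by
    constructor
    · intro h z
      rw [hmemA, hmemA]
      have := h (x.symm z)
      rw [happ] at this
      simp only [Equiv.apply_symm_apply] at this
      rw [this]
    · intro h y
      apply sum11_eq
      apply bool_eq_of_iff
      have := h (x y)
      rw [hmemA, hmemA] at this
      simp only [Equiv.symm_apply_apply] at this
      rw [happ]
      exact this
  by_cases hc : ∀ z, g z ∈ A ↔ z ∈ A
  · rw [signOnPrimes, dif_pos (hcond.mpr hc), Ginv, dif_pos hc]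
    have heq : ∀ y : Fin n, ((b y).isRight = true) ↔ x y ∉ A := by
      intro y
      rw [hmemA]
      simp only [Equiv.symm_apply_apply]
      rcases hb : b y with i | i <;> simp
    set e : {y : Fin n // (b y).isRight = true} ≃ {z : Fin n // z ∉ A} :=
      Equiv.subtypeEquiv x heq with he
    have hperm : e.permCongr ((x⁻¹ * g * x).subtypePerm
        (fun y => by simp only [hcond.mpr hc y]))
        = g.subtypePerm (fun z => not_iff_not.mpr (hc z)) := by
      apply Equiv.ext
      rintro ⟨z, hz⟩
      apply Subtype.ext
      simp [he, Equiv.permCongr_apply, Equiv.subtypeEquiv, Equiv.Perm.subtypePerm_apply,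
        happ, Equiv.apply_symm_apply]
    rw [← hperm, Equiv.Perm.sign_permCongr]
  · rw [signOnPrimes, dif_neg (fun h => hc (hcond.mp h)), Ginv, dif_neg hc]

lemma psiVal_eq {n : ℕ} (b : Fin n → Fin 1 ⊕ Fin 1) (g : Equiv.Perm (Fin n)) :
    psiVal b g = ∑ A ∈ Finset.powersetCard
      (Finset.univ.filter fun z => (b z).isLeft = true).card (Finset.univ : Finset (Fin n)),
      Ginv g A := by
  classical
  set A₀ : Finset (Fin n) := Finset.univ.filter fun z => (b z).isLeft = true with hA₀
  have hmem0 : ∀ z, z ∈ A₀ ↔ (b z).isLeft = true := by intro z; simp [hA₀]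
  -- the stabilizer cardinality
  have hHcard : Nat.card {σ : Equiv.Perm (Fin n) // ∀ x, b (σ x) = b x}
      = (Finset.univ.filter fun σ : Equiv.Perm (Fin n) => A₀.map σ.toEmbedding = A₀).card := by
    rw [Nat.card_eq_fintype_card, Fintype.card_subtype]
    congr 1
    apply Finset.filter_congr
    intro σ _
    rw [map_eq_iff]
    constructor
    · intro h z
      rw [hmem0, hmem0, h z]
    · intro h z
      apply sum11_eq
      apply bool_eq_of_iff
      rw [← hmem0, ← hmem0]
      exact h z
  have hfiber : ∀ A : Finset (Fin n), A₀.card = A.card →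
      (Finset.univ.filter fun x : Equiv.Perm (Fin n) => A₀.map x.toEmbedding = A).card
      = (Finset.univ.filter fun σ : Equiv.Perm (Fin n) => A₀.map σ.toEmbedding = A₀).card := by
    intro A hA
    obtain ⟨x₀, hx₀⟩ := exists_perm_map A₀ A hA
    apply Finset.card_nbij' (i := fun x => x₀⁻¹ * x) (j := fun x => x₀ * x)
    · intro x hx
      simp only [Finset.mem_coe, Finset.mem_filter, Finset.mem_univ, true_and] at hx ⊢
      have : A₀.map (x₀⁻¹ * x).toEmbedding = (A₀.map x.toEmbedding).map (x₀⁻¹ :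
          Equiv.Perm (Fin n)).toEmbedding := by
        rw [Finset.map_map]; rfl
      rw [this, hx, ← hx₀, Finset.map_map]
      have : (x₀.toEmbedding.trans (x₀⁻¹ : Equiv.Perm (Fin n)).toEmbedding)
          = Function.Embedding.refl (Fin n) := by
        ext z; simp
      rw [this, Finset.map_refl]
    · intro x hx
      simp only [Finset.mem_coe, Finset.mem_filter, Finset.mem_univ, true_and] at hx ⊢
      have : A₀.map (x₀ * x).toEmbedding = (A₀.map x.toEmbedding).map x₀.toEmbedding := by
        rw [Finset.map_map]; rfl
      rw [this, hx, hx₀]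
    · intro x _; group
    · intro x _; group
  have key : ∀ x : Equiv.Perm (Fin n), (A₀.map x.toEmbedding).card = A₀.card := by
    intro x; rw [Finset.card_map]
  rw [psiVal]
  have hrw : ∀ x : Equiv.Perm (Fin n), signOnPrimes b (x⁻¹ * g * x)
      = Ginv g (A₀.map x.toEmbedding) := fun x => signOnPrimes_conj b g x
  rw [Finset.sum_congr rfl (fun x _ => hrw x)]
  have hmaps : ∀ x : Equiv.Perm (Fin n), x ∈ (Finset.univ : Finset (Equiv.Perm (Fin n))) →
      A₀.map x.toEmbedding ∈ Finset.powersetCard A₀.card (Finset.univ : Finset (Fin n)) := by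
    intro x _
    rw [Finset.mem_powersetCard]
    exact ⟨Finset.subset_univ _, key x⟩
  rw [← Finset.sum_fiberwise_of_maps_to' hmaps (Ginv g)]
  have hinner : ∀ A ∈ Finset.powersetCard A₀.card (Finset.univ : Finset (Fin n)),
      (∑ x ∈ Finset.univ.filter fun x : Equiv.Perm (Fin n) => A₀.map x.toEmbedding = A, Ginv g A)
      = (Nat.card {σ : Equiv.Perm (Fin n) // ∀ x, b (σ x) = b x} : ℚ) * Ginv g A := by
    intro A hA
    rw [Finset.sum_const, hfiber A (by rw [(Finset.mem_powersetCard.mp hA).2]),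
      ← hHcard, nsmul_eq_mul]
  rw [Finset.sum_congr rfl hinner, ← Finset.mul_sum]
  have hne : (Nat.card {σ : Equiv.Perm (Fin n) // ∀ x, b (σ x) = b x} : ℚ) ≠ 0 := by
    have : Nonempty {σ : Equiv.Perm (Fin n) // ∀ x, b (σ x) = b x} := ⟨⟨1, fun x => rfl⟩⟩
    have := Nat.card_pos (α := {σ : Equiv.Perm (Fin n) // ∀ x, b (σ x) = b x})
    positivity
  rw [mul_comm, mul_div_assoc, div_self hne, mul_one]

lemma cf_support_invariant {n : ℕ} (g c : Equiv.Perm (Fin n)) (hc : c ∈ g.cycleFactorsFinset)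
    (x : Fin n) : g x ∈ c.support ↔ x ∈ c.support := by
  obtain ⟨hcyc, hsupp⟩ := Equiv.Perm.mem_cycleFactorsFinset_iff.mp hc
  constructor
  · intro h
    have hy : c⁻¹ (g x) ∈ c.support := by
      rwa [← Equiv.Perm.support_inv, Equiv.Perm.apply_mem_support, Equiv.Perm.support_inv]
    have := hsupp _ hy
    rw [show c (c⁻¹ (g x)) = g x from c.apply_symm_apply (g x)] at this
    have h2 : x = c⁻¹ (g x) := g.injective this
    rw [h2]; exact hy
  · intro h
    rw [← hsupp x h]
    exact Equiv.Perm.apply_mem_support.mpr h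

lemma pow_mem_invariant {n : ℕ} (g : Equiv.Perm (Fin n)) (A : Finset (Fin n))
    (h : ∀ x, g x ∈ A ↔ x ∈ A) (i : ℤ) (x : Fin n) : (g ^ i) x ∈ A ↔ x ∈ A := by
  have hnat : ∀ (m : ℕ) (y : Fin n), (g ^ m) y ∈ A ↔ y ∈ A := by
    intro m
    induction m with
    | zero => intro y; simp
    | succ m ih =>
      intro y
      rw [pow_succ', Equiv.Perm.mul_apply, h ((g ^ m) y), ih y]
  have hinv : ∀ y : Fin n, g⁻¹ y ∈ A ↔ y ∈ A := by
    intro y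
    conv_rhs => rw [← (show g (g⁻¹ y) = y from g.apply_symm_apply y)]
    exact (h (g⁻¹ y)).symm
  have hnatinv : ∀ (m : ℕ) (y : Fin n), (g⁻¹ ^ m) y ∈ A ↔ y ∈ A := by
    intro m
    induction m with
    | zero => intro y; simp
    | succ m ih =>
      intro y
      rw [pow_succ', Equiv.Perm.mul_apply, hinv ((g⁻¹ ^ m) y), ih y]
  rcases i with m | m
  · simpa using hnat m x
  · rw [Int.negSucc_eq, zpow_neg, ← inv_zpow]
    have hc : ((m : ℤ) + 1) = ((m + 1 : ℕ) : ℤ) := by push_cast; ring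
    rw [hc, zpow_natCast]
    exact hnatinv (m + 1) x

lemma biUnion_invariant {n : ℕ} (g : Equiv.Perm (Fin n)) (S : Finset (Equiv.Perm (Fin n)))
    (hS : S ⊆ g.cycleFactorsFinset) (x : Fin n) :
    g x ∈ S.biUnion Equiv.Perm.support ↔ x ∈ S.biUnion Equiv.Perm.support := by
  simp only [Finset.mem_biUnion]
  constructor
  · rintro ⟨c, hc, hx⟩
    exact ⟨c, hc, (cf_support_invariant g c (hS hc) x).mp hx⟩
  · rintro ⟨c, hc, hx⟩
    exact ⟨c, hc, (cf_support_invariant g c (hS hc) x).mpr hx⟩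

lemma Ginv_biUnion {n : ℕ} (g : Equiv.Perm (Fin n))
    (S : Finset (Equiv.Perm (Fin n))) (hS : S ⊆ g.cycleFactorsFinset) :
    Ginv g (S.biUnion Equiv.Perm.support)
      = ∏ c ∈ g.cycleFactorsFinset \ S, ((Equiv.Perm.sign c : ℤ) : ℚ) := by
  classical
  set A : Finset (Fin n) := S.biUnion Equiv.Perm.support with hA
  have hInv : ∀ x, g x ∈ A ↔ x ∈ A := biUnion_invariant g S hS
  set T : Finset (Equiv.Perm (Fin n)) := g.cycleFactorsFinset \ S with hT
  have hTdisj : (T : Set (Equiv.Perm (Fin n))).Pairwise fun a b => Equiv.Perm.Disjoint a b := by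
    intro a ha b hb hab
    exact (g.cycleFactorsFinset_pairwise_disjoint) (Finset.sdiff_subset ha)
      (Finset.sdiff_subset hb) hab
  have hTcomm : (T : Set (Equiv.Perm (Fin n))).Pairwise Commute :=
    hTdisj.imp fun a b h => h.commute
  set w : Equiv.Perm (Fin n) := T.noncommProd id hTcomm with hw
  have hsuppw : w.support = T.biUnion Equiv.Perm.support := by
    rw [hw]
    exact Equiv.Perm.support_noncommProd hTdisj
  have hdisjA : ∀ x ∈ A, x ∉ w.support := by
    intro x hxA hxw
    rw [hsuppw, Finset.mem_biUnion] at hxw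
    obtain ⟨c', hc', hxc'⟩ := hxw
    rw [hA, Finset.mem_biUnion] at hxA
    obtain ⟨c, hc, hxc⟩ := hxA
    have hne : c ≠ c' := by
      rintro rfl
      exact (Finset.mem_sdiff.mp hc').2 hc
    have := (g.cycleFactorsFinset_pairwise_disjoint (hS hc)
      (Finset.sdiff_subset hc') hne).disjoint_support
    exact Finset.disjoint_left.mp this hxc hxc'
  -- g agrees with w outside A
  have hkey : ∀ x : Fin n, x ∉ A → g x = w x := by
    intro x hx
    have hS_comm : ((S : Set (Equiv.Perm (Fin n)))).Pairwise Commute := by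
      intro a ha b hb hab
      exact ((g.cycleFactorsFinset_pairwise_disjoint) (hS ha) (hS hb) hab).commute
    set u : Equiv.Perm (Fin n) := S.noncommProd id hS_comm with hu
    have hSdisj : (S : Set (Equiv.Perm (Fin n))).Pairwise fun a b => Equiv.Perm.Disjoint a b :=
      fun a ha b hb hab => (g.cycleFactorsFinset_pairwise_disjoint) (hS ha) (hS hb) hab
    have hsuppu : u.support = A := by
      rw [hu, hA]
      exact Equiv.Perm.support_noncommProd hSdisj
    have hcf : S ∪ T = g.cycleFactorsFinset := Finset.union_sdiff_of_subset hS
    have hcomm : ((S ∪ T : Finset (Equiv.Perm (Fin n))) : Set (Equiv.Perm (Fin n))).Pairwise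
        (Function.onFun Commute id) := by
      rw [hcf]
      exact g.cycleFactorsFinset_mem_commute
    have hg : u * w = g := by
      have h1 := Finset.noncommProd_union_of_disjoint
        (Finset.disjoint_sdiff : Disjoint S T) id hcomm
      have h2 : (S ∪ T).noncommProd id hcomm = g := by
        rw [Finset.noncommProd_congr hcf (fun x _ => rfl) hcomm]
        exact g.cycleFactorsFinset_noncommProd
      rw [h1] at h2
      exact h2
    have hwx : w x ∉ A := by
      by_cases hmoved : w x = x
      · rwa [hmoved]
      · intro hwxA
        exact hdisjA (w x) hwxA (Equiv.Perm.apply_mem_support.mpr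
          (Equiv.Perm.mem_support.mpr hmoved))
    calc g x = u (w x) := by rw [← hg]; rfl
    _ = w x := by
        apply Equiv.Perm.notMem_support.mp
        rw [hsuppu]
        exact hwx
  rw [Ginv, dif_pos hInv]
  -- the restriction of g to the complement equals the restriction of w
  have hwmem : ∀ x, w x ∈ A ↔ x ∈ A := by
    intro x
    by_cases hx : x ∈ A
    · rw [Equiv.Perm.notMem_support.mp (hdisjA x hx)]
    · rw [← hkey x hx]
      exact hInv x
  have hwInv : ∀ x : Fin n, (w x ∉ A) ↔ (x ∉ A) :=
    fun x => not_iff_not.mpr (hwmem x)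
  have hsub : g.subtypePerm (p := fun x => x ∉ A) (fun x => not_iff_not.mpr (hInv x))
      = w.subtypePerm (p := fun x => x ∉ A) hwInv := by
    apply Equiv.ext
    rintro ⟨z, hz⟩
    apply Subtype.ext
    exact hkey z hz
  rw [hsub]
  have hsign : Equiv.Perm.sign (w.subtypePerm (p := fun x => x ∉ A) hwInv)
      = Equiv.Perm.sign w := by
    apply Equiv.Perm.sign_subtypePerm
    intro x hx
    intro hxA
    exact hdisjA x hxA (Equiv.Perm.mem_support.mpr hx)
  rw [hsign]
  have : Equiv.Perm.sign w = ∏ c ∈ T, Equiv.Perm.sign c := by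
    rw [hw, Finset.map_noncommProd T id hTcomm Equiv.Perm.sign]
    exact Finset.noncommProd_eq_prod _ _
  rw [this]
  push_cast
  rfl

lemma sum_Ginv {n : ℕ} (g : Equiv.Perm (Fin n)) (hsupp : g.support = Finset.univ) :
    ∑ A ∈ (Finset.univ : Finset (Fin n)).powerset, Ginv g A
      = ∏ c ∈ g.cycleFactorsFinset, (1 + ((Equiv.Perm.sign c : ℤ) : ℚ)) := by
  classical
  rw [Finset.prod_add]
  simp only [Finset.prod_const_one, one_mul]
  rw [← Finset.sum_filter_of_ne (p := fun A : Finset (Fin n) => ∀ x, g x ∈ A ↔ x ∈ A)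
    (fun A _ hne => by
      by_contra hA
      exact hne (by rw [Ginv, dif_neg hA]))]
  refine Finset.sum_nbij'
    (i := fun A => g.cycleFactorsFinset.filter fun c => c.support ⊆ A)
    (j := fun S => S.biUnion Equiv.Perm.support) ?_ ?_ ?_ ?_ ?_
  · intro A _
    rw [Finset.mem_powerset]
    exact Finset.filter_subset _ _
  · intro S hS
    rw [Finset.mem_powerset] at hS
    rw [Finset.mem_filter]
    exact ⟨Finset.mem_powerset.mpr (Finset.subset_univ _), biUnion_invariant g S hS⟩
  -- j (i A) = A
  · intro A hA
    rw [Finset.mem_filter] at hA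
    obtain ⟨-, hInv⟩ := hA
    apply Finset.Subset.antisymm
    · intro x hx
      rw [Finset.mem_biUnion] at hx
      obtain ⟨c, hc, hxc⟩ := hx
      exact (Finset.mem_filter.mp hc).2 hxc
    · intro x hxA
      rw [Finset.mem_biUnion]
      have hxsup : x ∈ g.support := by rw [hsupp]; exact Finset.mem_univ x
      refine ⟨g.cycleOf x, ?_, ?_⟩
      · rw [Finset.mem_filter]
        refine ⟨Equiv.Perm.cycleOf_mem_cycleFactorsFinset_iff.mpr hxsup, ?_⟩
        intro y hy
        rw [Equiv.Perm.mem_support_cycleOf_iff] at hy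
        obtain ⟨hsc, -⟩ := hy
        obtain ⟨i, rfl⟩ := hsc
        exact (pow_mem_invariant g A hInv i x).mpr hxA
      · rw [Equiv.Perm.mem_support_cycleOf_iff]
        exact ⟨Equiv.Perm.SameCycle.refl _ _, hxsup⟩
  -- i (j S) = S
  · intro S hS
    rw [Finset.mem_powerset] at hS
    apply Finset.Subset.antisymm
    · intro c hc
      rw [Finset.mem_filter] at hc
      obtain ⟨hccf, hcsub⟩ := hc
      have hcyc : c.IsCycle := (Equiv.Perm.mem_cycleFactorsFinset_iff.mp hccf).1
      obtain ⟨x, hx⟩ := hcyc.nonempty_support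
      have := hcsub hx
      rw [Finset.mem_biUnion] at this
      obtain ⟨c', hc', hxc'⟩ := this
      rcases eq_or_ne c c' with rfl | hne
      · exact hc'
      · exact absurd hxc' (Finset.disjoint_left.mp
          ((g.cycleFactorsFinset_pairwise_disjoint hccf (hS hc') hne).disjoint_support) hx)
    · intro c hc
      rw [Finset.mem_filter]
      refine ⟨hS hc, ?_⟩
      intro x hx
      rw [Finset.mem_biUnion]
      exact ⟨c, hc, hx⟩
  -- values agree
  · intro A hA
    rw [Finset.mem_filter] at hA
    obtain ⟨-, hInv⟩ := hA
    have hjA : (g.cycleFactorsFinset.filter fun c => c.support ⊆ A).biUnion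
        Equiv.Perm.support = A := by
      apply Finset.Subset.antisymm
      · intro x hx
        rw [Finset.mem_biUnion] at hx
        obtain ⟨c, hc, hxc⟩ := hx
        exact (Finset.mem_filter.mp hc).2 hxc
      · intro x hxA
        rw [Finset.mem_biUnion]
        have hxsup : x ∈ g.support := by rw [hsupp]; exact Finset.mem_univ x
        refine ⟨g.cycleOf x, ?_, ?_⟩
        · rw [Finset.mem_filter]
          refine ⟨Equiv.Perm.cycleOf_mem_cycleFactorsFinset_iff.mpr hxsup, ?_⟩
          intro y hy
          rw [Equiv.Perm.mem_support_cycleOf_iff] at hy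
          obtain ⟨hsc, -⟩ := hy
          obtain ⟨i, rfl⟩ := hsc
          exact (pow_mem_invariant g A hInv i x).mpr hxA
        · rw [Equiv.Perm.mem_support_cycleOf_iff]
          exact ⟨Equiv.Perm.SameCycle.refl _ _, hxsup⟩
    conv_lhs => rw [← hjA]
    exact Ginv_biUnion g _ (Finset.filter_subset _ _)

/-- The case `k = ℓ = 1` of Regev's theorem: `∑_{a=0}^n ψ_a(ν) = 2^r` if all parts of `ν`
are odd, and `0` otherwise. -/
theorem regev_one_one (n : ℕ) (hn : 0 < n) (ν : List ℕ) (hν : IsPartitionOf n ν)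
    (b : ℕ → Fin n → Fin 1 ⊕ Fin 1)
    (hb : ∀ a ≤ n, (Finset.univ.filter fun x => (b a x).isLeft = true).card = a)
    (g : Equiv.Perm (Fin n)) (hg : g.cycleType = ↑ν) :
    ∑ a ∈ Finset.range (n + 1), psiVal (b a) g =
      if ∀ m ∈ ν, Odd m then (2 : ℚ) ^ ν.length else 0 := by
  classical
  have hsum : ν.sum = n := hν.2.2
  have hsupport : g.support = Finset.univ := by
    apply Finset.eq_univ_of_card
    have h1 : g.support.card = g.cycleType.sum := (Equiv.Perm.sum_cycleType g).symm
    rw [h1, hg, Fintype.card_fin]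
    simpa using hsum
  have step1 : ∑ a ∈ Finset.range (n + 1), psiVal (b a) g
      = ∑ A ∈ (Finset.univ : Finset (Fin n)).powerset, Ginv g A := by
    rw [Finset.sum_powerset]
    rw [Finset.card_univ, Fintype.card_fin]
    apply Finset.sum_congr rfl
    intro a ha
    rw [psiVal_eq (b a) g, hb a (Nat.lt_succ_iff.mp (Finset.mem_range.mp ha))]
  rw [step1, sum_Ginv g hsupport]
  have step2 : ∏ c ∈ g.cycleFactorsFinset, (1 + ((Equiv.Perm.sign c : ℤ) : ℚ))
      = (ν.map fun m => 1 - (-1 : ℚ) ^ m).prod := by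
    have h1 : ∀ c ∈ g.cycleFactorsFinset,
        (1 + ((Equiv.Perm.sign c : ℤ) : ℚ)) = 1 - (-1 : ℚ) ^ c.support.card := by
      intro c hc
      have hcyc : c.IsCycle := (Equiv.Perm.mem_cycleFactorsFinset_iff.mp hc).1
      rw [hcyc.sign]
      push_cast
      ring
    rw [Finset.prod_congr rfl h1]
    have h2 : ∏ c ∈ g.cycleFactorsFinset, (1 - (-1 : ℚ) ^ c.support.card)
        = (g.cycleType.map fun m => 1 - (-1 : ℚ) ^ m).prod := by
      rw [Equiv.Perm.cycleType_def, Multiset.map_map, Finset.prod_eq_multiset_prod]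
      rfl
    rw [h2, hg]
    simp
  rw [step2]
  by_cases hodd : ∀ m ∈ ν, Odd m
  · rw [if_pos hodd]
    rw [List.prod_eq_pow_card _ (2 : ℚ) ?_, List.length_map]
    intro y hy
    rw [List.mem_map] at hy
    obtain ⟨m, hm, rfl⟩ := hy
    rw [(hodd m hm).neg_one_pow]
    norm_num
  · rw [if_neg hodd]
    push_neg at hodd
    obtain ⟨m, hm, hme⟩ := hodd
    rw [Nat.not_odd_iff_even] at hme
    apply List.prod_eq_zero
    rw [List.mem_map]
    exact ⟨m, hm, by rw [hme.neg_one_pow]; norm_num⟩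

end Regev
end

section
/- A partition $\alpha$ of $n$ admits at least one semistandard $(k,\ell)$-tableau (i.e. $s_{k,\ell}(\alpha) \neq 0$) if and only if $\alpha$ is contained in the $(k,\ell)$-hook, i.e. $\alpha_{k+1} \le \ell$ (the $(k+1)$-st part of $\alpha$ is at most $\ell$). -/
open MvPolynomial Finset

namespace Regev

lemma foldr_max_ge (α : List ℕ) {x : ℕ} (hx : x ∈ α) : x ≤ α.foldr max 0 := by
  induction α with
  | nil => simp at hx
  | cons a t ih =>
    simp only [List.foldr_cons]
    rcases List.mem_cons.mp hx with h | h
    · subst h; exact le_max_left _ _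
    · exact le_trans (ih h) (le_max_right _ _)

lemma mem_cells {α : List ℕ} {i j : ℕ} :
    (i, j) ∈ cells α ↔ i < α.length ∧ j < α.getD i 0 := by
  unfold cells
  simp only [Finset.mem_filter, Finset.mem_product, Finset.mem_range]
  constructor
  · rintro ⟨⟨h1, _⟩, h3⟩; exact ⟨h1, h3⟩
  · rintro ⟨h1, h2⟩
    refine ⟨⟨h1, lt_of_lt_of_le h2 ?_⟩, h2⟩
    rw [List.getD_eq_getElem _ _ h1]
    exact foldr_max_ge α (α.getElem_mem h1)

/-- `s_{k,ℓ}(α) ≠ 0` iff `α` is contained in the `(k,ℓ)`-hook, i.e. `α_{k+1} ≤ ℓ`. -/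
theorem sBR_ne_zero_iff_hook (k l n : ℕ) (α : List ℕ) (hα : IsPartitionOf n α) :
    sBR k l α ≠ 0 ↔ α.getD k 0 ≤ l := by
  classical
  have hmono : ∀ i j : ℕ, i ≤ j → j < α.length → α.getD j 0 ≤ α.getD i 0 := by
    intro i j hij hj
    rcases eq_or_lt_of_le hij with rfl | h
    · exact le_rfl
    · rw [List.getD_eq_getElem _ _ hj, List.getD_eq_getElem _ _ (h.trans hj)]
      exact List.pairwise_iff_get.mp hα.1 ⟨i, h.trans hj⟩ ⟨j, hj⟩ h
  rw [sBR, Nat.card_ne_zero]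
  constructor
  · rintro ⟨⟨⟨f, hrow, hcol⟩⟩, _⟩
    by_contra hl
    push_neg at hl
    have hkl : k < α.length := by
      by_contra h
      push_neg at h
      rw [List.getD_eq_default _ _ h] at hl
      omega
    have hcell : ∀ i j : ℕ, i ≤ k → j ≤ l → (i, j) ∈ cells α := by
      intro i j hi hj
      refine mem_cells.mpr ⟨lt_of_le_of_lt hi hkl, ?_⟩
      have := hmono i k hi hkl
      omega
    have colA : ∀ c : ℕ, c ≤ l → ∀ i : ℕ, i ≤ k → ∀ h : (i, c) ∈ cells α,
        (f ⟨(i, c), h⟩ : ℕ) < k → i ≤ (f ⟨(i, c), h⟩ : ℕ) := by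
      intro c hc i
      induction i with
      | zero => intro _ _ _; exact Nat.zero_le _
      | succ m ih =>
        intro hm h hv
        have h' : (m, c) ∈ cells α := hcell m c (by omega) hc
        have hstep := (hcol m c h' h).2 (by exact_mod_cast hv)
        have hstep' : (f ⟨(m, c), h'⟩ : ℕ) < (f ⟨(m + 1, c), h⟩ : ℕ) := hstep
        have := ih (by omega) h' (by omega)
        omega
    by_cases hex : ∃ c : ℕ, ∃ hc : c ≤ l, (f ⟨(k, c), hcell k c le_rfl hc⟩ : ℕ) < k
    · obtain ⟨c, hc, hv⟩ := hex
      have := colA c hc k le_rfl _ hv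
      omega
    · push_neg at hex
      have hall : ∀ j : ℕ, j ≤ l → ∀ h : (k, j) ∈ cells α,
          k + j ≤ (f ⟨(k, j), h⟩ : ℕ) := by
        intro j
        induction j with
        | zero =>
          intro _ h
          have := hex 0
          simpa using this (Nat.zero_le _)
        | succ m ih =>
          intro hm h
          have h' : (k, m) ∈ cells α := hcell k m le_rfl (by omega)
          have h1 := ih (by omega) h'
          have h2 := (hrow k m h' h).2 (by omega)
          have h2' : (f ⟨(k, m), h'⟩ : ℕ) < (f ⟨(k, m + 1), h⟩ : ℕ) := h2
          omega
      have hL : (k, l) ∈ cells α := hcell k l le_rfl le_rfl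
      have := hall l le_rfl hL
      have hb := (f ⟨(k, l), hL⟩).isLt
      omega
  · intro hl
    have hbound : ∀ c : ℕ × ℕ, c ∈ cells α →
        (if c.1 < k then c.1 else k + c.2) < k + l := by
      intro c hc
      obtain ⟨h1, h2⟩ := mem_cells.mp hc
      by_cases hik : c.1 < k
      · simp only [hik, if_pos]
        omega
      · simp only [hik, if_neg, if_false]
        push_neg at hik
        have := hmono k c.1 hik h1
        omega
    refine ⟨⟨⟨fun c => ⟨if c.1.1 < k then c.1.1 else k + c.1.2, hbound c.1 c.2⟩, ?_, ?_⟩⟩,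
      Finite.of_injective (fun x => x.1) fun a b hab => Subtype.ext hab⟩
    · intro i j h1 h2
      constructor
      · simp only [Fin.mk_le_mk]
        by_cases hik : i < k <;> simp [hik]
      · intro hge
        simp only [Fin.lt_def]
        by_cases hik : i < k
        · simp [hik] at hge ⊢; omega
        · simp [hik]
    · intro i j h1 h2
      constructor
      · simp only [Fin.mk_le_mk]
        by_cases hik : i < k
        · by_cases hik' : i + 1 < k <;> simp [hik, hik'] <;> try omega
        · have : ¬ (i + 1 < k) := by omega
          simp [hik, this]
      · intro hlt
        simp only [Fin.lt_def] at hlt ⊢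
        by_cases hik' : i + 1 < k
        · have hik : i < k := by omega
          simp [hik, hik']
        · simp [hik'] at hlt <;> omega

end Regev
end
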